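/- Let a_1, ..., a_{N-1} > 0 be fixed. Define for s ∈ (0, π] the complex number m(s) = (1/s)·e^{i s x_0}·[ Σ_{k=1}^{N-2} (a_k + a_{k+1}) e^{i s Σ_{j=1}^k a_j} − (Σ_{k=1}^{N-2} a_k) e^{i s Σ_{j=1}^{N-1} a_j} − Σ_{k=2}^{N-1} a_k ]. Then the set { s ∈ (0, π] : m(s) = 0 } is finite. -/

import Mathlib

open Finset Complex

/-- The character `s ↦ exp(I t s)` as a monoid hom `Multiplicative ℝ →* ℂ`. -/
noncomputable def expChar (t : ℝ) : Multiplicative ℝ →* ℂ where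
  toFun s := Complex.exp (Complex.I * t * (Multiplicative.toAdd s : ℝ))
  map_one' := by simp
  map_mul' x y := by
    simp only [toAdd_mul, Complex.ofReal_add, mul_add, Complex.exp_add]

lemma expChar_injective : Function.Injective expChar := by
  intro t t' h
  by_contra hne
  have hd : t - t' ≠ 0 := sub_ne_zero.mpr hne
  set r : ℝ := Real.pi / (t - t') with hr
  have key := congrFun (congrArg (fun f : Multiplicative ℝ →* ℂ => (f : Multiplicative ℝ → ℂ)) h)
    (Multiplicative.ofAdd r)
  simp only [expChar, MonoidHom.coe_mk, OneHom.coe_mk, toAdd_ofAdd] at key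
  have h1 : Complex.exp (Complex.I * t * (r : ℂ) - Complex.I * t' * (r : ℂ)) = 1 := by
    rw [Complex.exp_sub, key, div_self (Complex.exp_ne_zero _)]
  have h2 : Complex.I * t * (r : ℂ) - Complex.I * t' * (r : ℂ) = Real.pi * Complex.I := by
    have hd' : ((t : ℂ) - t') ≠ 0 := by exact_mod_cast Complex.ofReal_ne_zero.mpr hd
    rw [hr]
    push_cast
    field_simp
  rw [h2, Complex.exp_pi_mul_I] at h1
  norm_num at h1

/-- The mean displacement `m(s)` of the generalized tiling billiard vanishes for
at most finitely many values of the inverse circumradius `s ∈ (0, π]`. -/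
theorem stmt_2 (N : ℕ) (hN : 5 ≤ N) (a : ℕ → ℝ)
    (ha : ∀ k ∈ Finset.Icc 1 (N - 1), 0 < a k) (x₀ : ℝ)
    (m : ℝ → ℂ)
    (hm : ∀ s : ℝ, m s = (1 / (s : ℂ)) * Complex.exp (Complex.I * s * x₀) *
      ((∑ k ∈ Finset.Icc 1 (N - 2), ((a k : ℂ) + (a (k + 1) : ℂ)) *
          Complex.exp (Complex.I * s * (∑ j ∈ Finset.Icc 1 k, a j : ℝ)))
        - (∑ k ∈ Finset.Icc 1 (N - 2), (a k : ℂ)) *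
            Complex.exp (Complex.I * s * (∑ j ∈ Finset.Icc 1 (N - 1), a j : ℝ))
        - (∑ k ∈ Finset.Icc 2 (N - 1), (a k : ℂ)))) :
    {s ∈ Set.Ioc (0 : ℝ) Real.pi | m s = 0}.Finite := by
  set θ : ℕ → ℝ := fun k => ∑ j ∈ Finset.Icc 1 k, a j with hθdef
  -- the bracket, as a function of a real variable
  set h : ℝ → ℂ := fun s =>
    (∑ k ∈ Finset.Icc 1 (N - 2), ((a k : ℂ) + (a (k + 1) : ℂ)) *
        Complex.exp (Complex.I * s * (θ k : ℝ)))
      - (∑ k ∈ Finset.Icc 1 (N - 2), (a k : ℂ)) *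
          Complex.exp (Complex.I * s * (θ (N - 1) : ℝ))
      - (∑ k ∈ Finset.Icc 2 (N - 1), (a k : ℂ)) with hhdef
  by_contra hinf
  replace hinf : {s ∈ Set.Ioc (0 : ℝ) Real.pi | m s = 0}.Infinite := hinf
  -- zeros of m in (0, π] are zeros of h
  have hzero : ∀ s ∈ {s ∈ Set.Ioc (0 : ℝ) Real.pi | m s = 0}, h s = 0 := by
    rintro s ⟨hs, hms⟩
    have hs0 : (s : ℂ) ≠ 0 := Complex.ofReal_ne_zero.mpr (ne_of_gt hs.1)
    have := hm s
    rw [hms] at this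
    have := this.symm
    rcases mul_eq_zero.mp this with h1 | h1
    · rcases mul_eq_zero.mp h1 with h2 | h2
      · exact absurd h2 (by simp [hs0])
      · exact absurd h2 (Complex.exp_ne_zero _)
    · exact h1
  -- h is analytic on ℝ
  have hexp : ∀ t : ℝ, AnalyticOnNhd ℝ (fun s : ℝ => Complex.exp (Complex.I * s * t)) Set.univ := by
    intro t
    have hlin : AnalyticOnNhd ℝ (fun s : ℝ => (Complex.I * s * t : ℂ)) Set.univ :=
      (analyticOnNhd_const.mul (Complex.ofRealCLM.analyticOnNhd Set.univ)).mul analyticOnNhd_const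
    exact (analyticOnNhd_cexp.restrictScalars).comp hlin (Set.mapsTo_univ _ _)
  have hana : AnalyticOnNhd ℝ h Set.univ := by
    apply AnalyticOnNhd.sub
    apply AnalyticOnNhd.sub
    · exact Finset.analyticOnNhd_fun_sum _ fun k _ => analyticOnNhd_const.mul (hexp (θ k))
    · exact analyticOnNhd_const.mul (hexp (θ (N - 1)))
    · exact analyticOnNhd_const
  -- accumulation point of zeros
  obtain ⟨z₀, hz₀K, hz₀⟩ := hinf.exists_accPt_of_subset_isCompact (isCompact_Icc (a := (0:ℝ))
    (b := Real.pi)) (fun s hs => ⟨le_of_lt hs.1.1, hs.1.2⟩)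
  have hfreq : ∃ᶠ z in nhdsWithin z₀ {z₀}ᶜ, h z = 0 := by
    have := (accPt_iff_frequently (x := z₀)).mp hz₀
    rw [frequently_nhdsWithin_iff]
    exact this.mono fun z hz => ⟨hzero z hz.2, hz.1⟩
  have hzero' : ∀ s : ℝ, h s = 0 := fun s =>
    hana.eqOn_zero_of_preconnected_of_frequently_eq_zero isPreconnected_univ
      (Set.mem_univ z₀) hfreq (Set.mem_univ s)
  -- rewrite h as a single exponential sum over Icc 0 (N-1)
  set c : ℕ → ℂ := fun k =>
    if k = 0 then -(∑ j ∈ Finset.Icc 2 (N - 1), (a j : ℂ))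
    else if k = N - 1 then -(∑ j ∈ Finset.Icc 1 (N - 2), (a j : ℂ))
    else (a k : ℂ) + (a (k + 1) : ℂ) with hcdef
  have hsplit : Finset.Icc 0 (N - 1) = insert 0 (insert (N - 1) (Finset.Icc 1 (N - 2))) := by
    ext k
    simp only [Finset.mem_Icc, Finset.mem_insert]
    omega
  have hsum : ∀ s : ℝ, ∑ k ∈ Finset.Icc 0 (N - 1), c k * Complex.exp (Complex.I * s * (θ k : ℝ))
      = h s := by
    intro s
    rw [hsplit, Finset.sum_insert, Finset.sum_insert]
    · have h0 : θ 0 = 0 := by simp [hθdef]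
      have hc0 : c 0 = -(∑ j ∈ Finset.Icc 2 (N - 1), (a j : ℂ)) := by simp [hcdef]
      have hcN : c (N - 1) = -(∑ j ∈ Finset.Icc 1 (N - 2), (a j : ℂ)) := by
        simp only [hcdef]
        rw [if_neg (show ¬(N - 1 = 0) by omega)]
        simp
      have hrest : ∑ k ∈ Finset.Icc 1 (N - 2), c k * Complex.exp (Complex.I * s * (θ k : ℝ))
          = ∑ k ∈ Finset.Icc 1 (N - 2), ((a k : ℂ) + (a (k + 1) : ℂ)) *
              Complex.exp (Complex.I * s * (θ k : ℝ)) := by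
        apply Finset.sum_congr rfl
        intro k hk
        simp only [Finset.mem_Icc] at hk
        simp only [hcdef]
        rw [if_neg (by omega), if_neg (by omega)]
      rw [hrest, hc0, hcN, h0, hhdef]
      push_cast
      simp only [mul_zero, Complex.exp_zero, mul_one]
      ring
    · simp only [Finset.mem_Icc]
      omega
    · simp only [Finset.mem_insert, Finset.mem_Icc]
      omega
  -- θ is injective on Icc 0 (N-1)
  have hθmono : ∀ k k' : ℕ, k < k' → k' ≤ N - 1 → θ k < θ k' := by
    intro k k' hkk' hk'
    refine Finset.sum_lt_sum_of_subset (Finset.Icc_subset_Icc le_rfl (le_of_lt hkk'))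
      (i := k + 1) (Finset.mem_Icc.mpr ⟨by omega, by omega⟩)
      (by simp only [Finset.mem_Icc]; omega)
      (ha (k + 1) (Finset.mem_Icc.mpr ⟨by omega, by omega⟩))
      (fun j hj _ => le_of_lt (ha j (Finset.mem_Icc.mpr ⟨(Finset.mem_Icc.mp hj).1,
        le_trans (Finset.mem_Icc.mp hj).2 hk'⟩)))
  -- linear independence of characters
  have hinj : Function.Injective
      (fun k : (Finset.Icc 0 (N - 1) : Finset ℕ) => expChar (θ k.1)) := by
    intro k k' hkk'
    have hθeq : θ k.1 = θ k'.1 := expChar_injective hkk'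
    have hk := Finset.mem_Icc.mp k.2
    have hk' := Finset.mem_Icc.mp k'.2
    rcases lt_trichotomy k.1 k'.1 with hlt | heq | hgt
    · exact absurd hθeq (ne_of_lt (hθmono _ _ hlt hk'.2))
    · exact Subtype.ext heq
    · exact absurd hθeq.symm (ne_of_lt (hθmono _ _ hgt hk.2))
  have li : LinearIndependent ℂ
      (fun k : (Finset.Icc 0 (N - 1) : Finset ℕ) => (expChar (θ k.1) : Multiplicative ℝ → ℂ)) :=
    (linearIndependent_monoidHom (Multiplicative ℝ) ℂ).comp _ hinj
  -- the linear combination vanishes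
  have hcomb : ∑ k : (Finset.Icc 0 (N - 1) : Finset ℕ),
      c k.1 • (expChar (θ k.1) : Multiplicative ℝ → ℂ) = 0 := by
    funext s
    have := hsum (Multiplicative.toAdd s)
    rw [hzero' (Multiplicative.toAdd s)] at this
    rw [← Finset.sum_coe_sort (Finset.Icc 0 (N - 1))
      (fun k => c k * Complex.exp (Complex.I * (Multiplicative.toAdd s : ℝ) * (θ k : ℝ)))] at this
    simp only [Finset.sum_apply, Pi.smul_apply, smul_eq_mul, Pi.zero_apply]
    rw [← this]
    apply Finset.sum_congr rfl
    intro k _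
    simp only [expChar, MonoidHom.coe_mk, OneHom.coe_mk]
    ring_nf
  have := linearIndependent_iff'.mp li Finset.univ (fun k => c k.1)
    (by simpa using hcomb) ⟨N - 1, Finset.mem_Icc.mpr ⟨Nat.zero_le _, le_rfl⟩⟩
    (Finset.mem_univ _)
  have hcN0 : c (N - 1) = 0 := this
  have hcN : c (N - 1) = -((∑ j ∈ Finset.Icc 1 (N - 2), a j : ℝ) : ℂ) := by
    simp only [hcdef]
    rw [if_neg (show ¬(N - 1 = 0) by omega)]
    push_cast
    simp
  have hpos : 0 < ∑ j ∈ Finset.Icc 1 (N - 2), a j := by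
    apply Finset.sum_pos
    · intro j hj
      exact ha j (Finset.mem_Icc.mpr ⟨(Finset.mem_Icc.mp hj).1,
        by have := (Finset.mem_Icc.mp hj).2; omega⟩)
    · exact ⟨1, Finset.mem_Icc.mpr ⟨le_rfl, by omega⟩⟩
  rw [hcN, neg_eq_zero, Complex.ofReal_eq_zero] at hcN0
  exact absurd hcN0 (ne_of_gt hpos)
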